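/- arXiv:1412.8624 — 5 statements merged into one kernel-verified Lean document; each statement's English description precedes it below -/
import Mathlib

section
/- Suppose x, λ, u : ℝ → ℝ with x and λ differentiable, and for all t the function u satisfies u(t) = (x(t)·(α + λ(t)·β·P·(1 - x(t))))/(2C), the state satisfies x'(t) = β·x(t)·(1 - x(t))·(P·u(t) - π₀), and the co-state satisfies the Pontryagin condition λ'(t) = -(α·u(t) + λ(t)·β·(1 - 2·x(t))·(P·u(t) - π₀)). Then u is differentiable and u'(t) = -(α·β·π₀/(2C))·x(t)·(1 - x(t)) for all t. -/
/-- Pontryagin system for the quality-dependent-revenue control problem: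
the Hamiltonian-maximizing control `u` satisfies the stated ODE. -/
theorem stmt_0 (α β P π₀ C : ℝ) (hC : C ≠ 0)
    (x lam u : ℝ → ℝ)
    (hx : Differentiable ℝ x) (hlam : Differentiable ℝ lam)
    (hu : ∀ t, u t = (x t * (α + lam t * β * P * (1 - x t))) / (2 * C))
    (hxdot : ∀ t, deriv x t = β * x t * (1 - x t) * (P * u t - π₀))
    (hlamdot : ∀ t, deriv lam t =
      -(α * u t + lam t * β * (1 - 2 * x t) * (P * u t - π₀))) :
    Differentiable ℝ u ∧
      ∀ t, deriv u t = -(α * β * π₀ / (2 * C)) * x t * (1 - x t) := by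
  have hue : u = fun t => (x t * (α + lam t * β * P * (1 - x t))) / (2 * C) :=
    funext hu
  have key : ∀ t, HasDerivAt u
      ((deriv x t * (α + lam t * β * P * (1 - x t)) +
        x t * (deriv lam t * β * P * (1 - x t) +
          lam t * β * P * (0 - deriv x t))) / (2 * C)) t := by
    intro t
    have h1 : HasDerivAt x (deriv x t) t := (hx t).hasDerivAt
    have h2 : HasDerivAt lam (deriv lam t) t := (hlam t).hasDerivAt
    have hg : HasDerivAt (fun s => α + lam s * β * P * (1 - x s))
        (0 + ((deriv lam t * β * P) * (1 - x t) +
          (lam t * β * P) * (0 - deriv x t))) t :=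
      (hasDerivAt_const t α).add
        (((h2.mul_const β).mul_const P).mul ((hasDerivAt_const t 1).sub h1))
    have h : HasDerivAt (fun s => x s * (α + lam s * β * P * (1 - x s)) / (2 * C)) _ t :=
      (h1.mul hg).div_const (2 * C)
    rw [hue]
    convert h using 1
    ring
  refine ⟨fun t => (key t).differentiableAt, fun t => ?_⟩
  have := (key t).deriv
  rw [this, hxdot t, hlamdot t, hu t]
  field_simp
  ring
end

section
/- Suppose x, λ, u : ℝ → ℝ with x and λ differentiable, and for all t the function u satisfies u(t) = (x(t)·(α + λ(t)·β·P·(1 - x(t))))/(2C), x'(t) = β·x(t)·(1 - x(t))·(P·u(t) - π₀), and λ'(t) = -(α·u(t) + λ(t)·β·(1 - 2·x(t))·(P·u(t) - π₀)). If moreover α > 0, β > 0, π₀ > 0, C > 0 and x(t) ∈ [0,1] for all t, then u is monotone nonincreasing. -/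
/-- Lehman's 7th law as an emergent property: along the Pontryagin system of the
quality-dependent-revenue control problem, optimal effort is nonincreasing. -/
theorem stmt_1 (α β P π₀ C : ℝ)
    (x lam u : ℝ → ℝ)
    (hx : Differentiable ℝ x) (hlam : Differentiable ℝ lam)
    (hu : ∀ t, u t = (x t * (α + lam t * β * P * (1 - x t))) / (2 * C))
    (hxdot : ∀ t, deriv x t = β * x t * (1 - x t) * (P * u t - π₀))
    (hlamdot : ∀ t, deriv lam t =
      -(α * u t + lam t * β * (1 - 2 * x t) * (P * u t - π₀)))
    (hα : α > 0) (hβ : β > 0) (hπ₀ : π₀ > 0) (hC : C > 0)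
    (hxrange : ∀ t, x t ∈ Set.Icc (0 : ℝ) 1) :
    Antitone u := by
  have hueq : u = fun t => (x t * (α + lam t * β * P * (1 - x t))) / (2 * C) :=
    funext hu
  have key : ∀ t, HasDerivAt u (-(α * β * π₀) * (x t * (1 - x t)) / (2 * C)) t := by
    intro t
    have hx' := (hx t).hasDerivAt
    have hl' := (hlam t).hasDerivAt
    have hinner : HasDerivAt (fun s => α + lam s * β * P * (1 - x s))
        ((deriv lam t * β * P) * (1 - x t) + lam t * β * P * (0 - deriv x t)) t :=
      (((hl'.mul_const β).mul_const P).mul ((hasDerivAt_const t (1 : ℝ)).sub hx')).const_add α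
    have h : HasDerivAt (fun s => (x s * (α + lam s * β * P * (1 - x s))) / (2 * C))
        ((deriv x t * (α + lam t * β * P * (1 - x t)) +
          x t * ((deriv lam t * β * P) * (1 - x t) + lam t * β * P * (0 - deriv x t))) / (2 * C)) t :=
      (hx'.mul hinner).div_const _
    rw [← hueq] at h
    convert h using 1
    rw [hxdot, hlamdot]
    ring
  have hdiff : Differentiable ℝ u := fun t => (key t).differentiableAt
  apply antitone_of_deriv_nonpos hdiff
  intro t
  rw [(key t).deriv]
  obtain ⟨h0, h1⟩ := hxrange t
  have : (0:ℝ) ≤ x t * (1 - x t) := mul_nonneg h0 (by linarith)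
  have hnum : -(α * β * π₀) * (x t * (1 - x t)) ≤ 0 := mul_nonpos_of_nonpos_of_nonneg (neg_nonpos.mpr (by positivity)) this
  exact div_nonpos_of_nonpos_of_nonneg hnum (by linarith)
end

section
/- Let a, b, f, g : ℝ → ℝ be differentiable, let r ≠ 0 be real, and suppose x, λ : ℝ → ℝ are differentiable functions such that, setting u(t) = (-b(x(t)) - g(x(t))·λ(t))/(2r), one has x'(t) = f(x(t)) + u(t)·g(x(t)) and λ'(t) = -a'(x(t)) - u(t)·(b'(x(t)) + λ(t)·g'(x(t))) - λ(t)·f'(x(t)) for all t. Then u is differentiable with u'(t) = (g(x(t))·a'(x(t)) - f(x(t))·b'(x(t)))/(2r) + λ(t)·(g(x(t))·f'(x(t)) - f(x(t))·g'(x(t)))/(2r). -/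
/-- The general Pontryagin system: the Hamiltonian-maximizing control satisfies
`u' = (g a' - f b')/(2r) + λ (g f' - f g')/(2r)` along the state. -/
theorem stmt_11 (a b f g : ℝ → ℝ)
    (ha : Differentiable ℝ a) (hb : Differentiable ℝ b)
    (hf : Differentiable ℝ f) (hg : Differentiable ℝ g)
    (r : ℝ) (hr : r ≠ 0)
    (x lam u : ℝ → ℝ)
    (hx : Differentiable ℝ x) (hlam : Differentiable ℝ lam)
    (hu : ∀ t, u t = (-b (x t) - g (x t) * lam t) / (2 * r))
    (hxdot : ∀ t, deriv x t = f (x t) + u t * g (x t))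
    (hlamdot : ∀ t, deriv lam t =
      -deriv a (x t) - u t * (deriv b (x t) + lam t * deriv g (x t))
        - lam t * deriv f (x t)) :
    Differentiable ℝ u ∧
      ∀ t, deriv u t =
        (g (x t) * deriv a (x t) - f (x t) * deriv b (x t)) / (2 * r)
          + lam t * ((g (x t) * deriv f (x t) - f (x t) * deriv g (x t)) / (2 * r)) := by
  have hueq : u = fun t => (-b (x t) - g (x t) * lam t) / (2 * r) := funext hu
  have key : ∀ t, HasDerivAt u
      ((-(deriv b (x t) * deriv x t) -
        (deriv g (x t) * deriv x t * lam t + g (x t) * deriv lam t)) / (2 * r)) t := by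
    intro t
    have hbx : HasDerivAt (fun s => b (x s)) (deriv b (x t) * deriv x t) t :=
      (hb (x t)).hasDerivAt.comp t (hx t).hasDerivAt
    have hgx : HasDerivAt (fun s => g (x s)) (deriv g (x t) * deriv x t) t :=
      (hg (x t)).hasDerivAt.comp t (hx t).hasDerivAt
    have hl : HasDerivAt lam (deriv lam t) t := (hlam t).hasDerivAt
    have := ((hbx.neg.sub (hgx.mul hl)).div_const (2 * r))
    simpa [hueq, neg_mul] using this
  refine ⟨fun t => (key t).differentiableAt, fun t => ?_⟩
  rw [(key t).deriv, hxdot t, hlamdot t, hu t]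
  field_simp
  ring
end

section
/- Let a, b, f, g : ℝ → ℝ be differentiable with g(y)·f'(y) - f(y)·g'(y) = 0 for all y, let r ≠ 0 be real, and suppose x, λ : ℝ → ℝ are differentiable functions such that, setting u(t) = (-b(x(t)) - g(x(t))·λ(t))/(2r), one has x'(t) = f(x(t)) + u(t)·g(x(t)) and λ'(t) = -a'(x(t)) - u(t)·(b'(x(t)) + λ(t)·g'(x(t))) - λ(t)·f'(x(t)) for all t. Then u is differentiable and u'(t) = (g(x(t))·a'(x(t)) - f(x(t))·b'(x(t)))/(2r); in particular u'(t) is a function of the state x(t) alone and does not involve the co-state λ(t). -/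
/-- Proposition 6: when the Wronskian-type expression `g f' - f g'` vanishes,
the control's derivative depends on the state alone. -/
theorem stmt_12 (a b f g : ℝ → ℝ)
    (ha : Differentiable ℝ a) (hb : Differentiable ℝ b)
    (hf : Differentiable ℝ f) (hg : Differentiable ℝ g)
    (hW : ∀ y, g y * deriv f y - f y * deriv g y = 0)
    (r : ℝ) (hr : r ≠ 0)
    (x lam u : ℝ → ℝ)
    (hx : Differentiable ℝ x) (hlam : Differentiable ℝ lam)
    (hu : ∀ t, u t = (-b (x t) - g (x t) * lam t) / (2 * r))
    (hxdot : ∀ t, deriv x t = f (x t) + u t * g (x t))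
    (hlamdot : ∀ t, deriv lam t =
      -deriv a (x t) - u t * (deriv b (x t) + lam t * deriv g (x t))
        - lam t * deriv f (x t)) :
    Differentiable ℝ u ∧
      ∀ t, deriv u t =
        (g (x t) * deriv a (x t) - f (x t) * deriv b (x t)) / (2 * r) := by
  have hfun : u = fun s => (-b (x s) - g (x s) * lam s) / (2 * r) := funext hu
  have hU : ∀ t, HasDerivAt u
      ((g (x t) * deriv a (x t) - f (x t) * deriv b (x t)) / (2 * r)) t := by
    intro t
    have hxd := (hx t).hasDerivAt
    have hbd := ((hb (x t)).hasDerivAt.comp t hxd)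
    have hgd := ((hg (x t)).hasDerivAt.comp t hxd)
    have hld := (hlam t).hasDerivAt
    have H := (hbd.neg.sub (hgd.mul hld)).div_const (2 * r)
    rw [hfun]
    convert H using 1
    any_goals rfl
    rw [hxdot t, hlamdot t]
    have hw := hW (x t)
    field_simp
    ring_nf
    simp only [Function.comp_apply]
    ring
    linear_combination (-lam t) * hw
  exact ⟨fun t => (hU t).differentiableAt, fun t => (hU t).deriv⟩
end

section
/- Suppose x, λ, u : ℝ → ℝ with x and λ differentiable, and for all t the function u satisfies u(t) = (β·P·λ(t)·x(t)·(1 - x(t)))/(2C), the state satisfies x'(t) = β·x(t)·(1 - x(t))·(P·u(t) - π₀), and the co-state satisfies the Pontryagin condition λ'(t) = -(α + λ(t)·β·(1 - 2·x(t))·(P·u(t) - π₀)). Then u is differentiable and u'(t) = -(α·β·P/(2C))·x(t)·(1 - x(t)) for all t. -/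
/-- Pontryagin system for the constant-revenue control problem: the
Hamiltonian-maximizing control `u` satisfies the stated ODE. -/
theorem stmt_15 (α β P π₀ C : ℝ) (hC : C ≠ 0)
    (x lam u : ℝ → ℝ)
    (hx : Differentiable ℝ x) (hlam : Differentiable ℝ lam)
    (hu : ∀ t, u t = (β * P * lam t * x t * (1 - x t)) / (2 * C))
    (hxdot : ∀ t, deriv x t = β * x t * (1 - x t) * (P * u t - π₀))
    (hlamdot : ∀ t, deriv lam t =
      -(α + lam t * β * (1 - 2 * x t) * (P * u t - π₀))) :
    Differentiable ℝ u ∧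
      ∀ t, deriv u t = -(α * β * P / (2 * C)) * x t * (1 - x t) := by
  have hue : u = fun t => (β * P * lam t * x t * (1 - x t)) / (2 * C) :=
    funext hu
  have key : ∀ t, HasDerivAt u (-(α * β * P / (2 * C)) * x t * (1 - x t)) t := by
    intro t
    have hx' := (hx t).hasDerivAt
    have hl' := (hlam t).hasDerivAt
    have H : HasDerivAt (fun t => (β * P * lam t * x t * (1 - x t)) / (2 * C))
        (((β * P * deriv lam t * x t + β * P * lam t * deriv x t) * (1 - x t)
          + β * P * lam t * x t * (0 - deriv x t)) / (2 * C)) t := by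
      exact ((((hl'.const_mul (β * P)).mul hx').mul
        ((hasDerivAt_const t (1:ℝ)).sub hx')).div_const (2 * C))
    rw [← hue] at H
    convert H using 1
    rw [hxdot, hlamdot, hu]
    have h2C : (2 * C) ≠ 0 := by simp [hC]
    field_simp
    ring
  refine ⟨fun t => (key t).differentiableAt, fun t => (key t).deriv⟩
end
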